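/- Suppose the coordinates are connected (i ~ j for all i,j) but no index is strongly connected to every other index. Let A ⊆ {1,…,n} be nonempty and f ∉ A be such that σ_{if} is constant for every i ∈ A, and assume A ∪ {f} ≠ {1,…,n}. Then there exist a set A' with A ∪ {f} ⊆ A' and an index h ∉ A' such that σ_{ih} is constant for every i ∈ A'. -/
import Mathlib


/-- (Claim in the proof that `S ≠ ∅`.) Suppose the coordinates
are connected but no index is strongly connected to every other index. If
`A ⊆ {1,…,n}` is nonempty, `f ∉ A`, `σ i f` is constant for every `i ∈ A`, and
`A ∪ {f}` is not the whole index set, then there are a set `A' ⊇ A ∪ {f}` and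
an index `h ∉ A'` with `σ i h` constant for every `i ∈ A'`. -/
theorem claim_enlarge_constant_set (n : ℕ) (hn : 3 ≤ n)
    (σ σ' : Fin n → Fin n → ℝ → ℝ)
    (hderiv : ∀ i j : Fin n, i ≠ j → ∀ x : ℝ, HasDerivAt (σ i j) (σ' i j x) x)
    (hne : ∀ i j : Fin n, i ≠ j → ∀ s t : ℝ, σ i j s + σ j i t ≠ 0)
    (heq : ∀ i j k : Fin n, i ≠ j → j ≠ k → i ≠ k → ∀ s t u : ℝ,
      σ' j i t * σ' k i u * (σ j k t + σ k j u)
        - σ' j i t * σ' k j u * (σ k i u + σ i k s)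
        - σ' k i u * σ' j k t * (σ i j s + σ j i t) = 0)
    (hconn : ∀ i j : Fin n,
      i = j ∨ ((∃ x, σ' i j x ≠ 0) ∨ (∃ x, σ' j i x ≠ 0)) ∨
        ∃ k, k ≠ i ∧ k ≠ j ∧ (∃ x, σ' k i x ≠ 0) ∧ (∃ x, σ' k j x ≠ 0))
    (hnoS : ¬ ∃ i : Fin n, ∀ j : Fin n, j ≠ i →
      ((∃ x, σ' i j x ≠ 0) ∨ (∃ x, σ' j i x ≠ 0)))
    (A : Set (Fin n)) (hA : A.Nonempty) (f : Fin n) (hf : f ∉ A)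
    (hconst : ∀ i ∈ A, ∀ x : ℝ, σ' i f x = 0)
    (hnotall : A ∪ {f} ≠ Set.univ) :
    ∃ (A' : Set (Fin n)) (h : Fin n), A ∪ {f} ⊆ A' ∧ h ∉ A' ∧
      ∀ i ∈ A', ∀ x : ℝ, σ' i h x = 0 := by
  push_neg at hnoS
  obtain ⟨h, hhf, hfh0, hhf0⟩ := hnoS f
  -- f and h are not strongly connected, so connectivity gives k
  rcases hconn f h with hfeq | hsc | ⟨k, hkf, hkh, ⟨x₁, hx₁⟩, ⟨x₂, hx₂⟩⟩
  · exact absurd hfeq.symm hhf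
  · rcases hsc with ⟨x, hx⟩ | ⟨x, hx⟩
    · exact absurd (hfh0 x) hx
    · exact absurd (hhf0 x) hx
  -- σ' f k ≡ 0
  have hfk0 : ∀ t, σ' f k t = 0 := by
    intro t
    have E := heq h f k hhf (Ne.symm hkf) (Ne.symm hkh) 0 t x₂
    rw [hfh0 t] at E
    have E' : σ' k h x₂ * (σ' f k t * (σ h f 0 + σ f h t)) = 0 := by linarith [E]
    rcases mul_eq_zero.mp E' with h1 | h2
    · exact absurd h1 hx₂
    · rcases mul_eq_zero.mp h2 with h3 | h4
      · exact h3
      · exact absurd h4 (hne h f hhf 0 t)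
  -- σ' h k ≡ 0
  have hhk0 : ∀ t, σ' h k t = 0 := by
    intro t
    have E := heq f h k (Ne.symm hhf) (Ne.symm hkh) (Ne.symm hkf) 0 t x₁
    rw [hhf0 t] at E
    have E' : σ' k f x₁ * (σ' h k t * (σ f h 0 + σ h f t)) = 0 := by linarith [E]
    rcases mul_eq_zero.mp E' with h1 | h2
    · exact absurd h1 hx₁
    · rcases mul_eq_zero.mp h2 with h3 | h4
      · exact h3
      · exact absurd h4 (hne f h (Ne.symm hhf) 0 t)
  -- σ' a k ≡ 0 for a ∈ A
  have hak0 : ∀ a ∈ A, ∀ t, σ' a k t = 0 := by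
    intro a ha t
    have haf : f ≠ a := fun e => hf (e ▸ ha)
    have hak : a ≠ k := by
      rintro rfl
      exact hx₁ (hconst a ha x₁)
    have E := heq f a k haf hak (Ne.symm hkf) 0 t x₁
    rw [hconst a ha t] at E
    have E' : σ' k f x₁ * (σ' a k t * (σ f a 0 + σ a f t)) = 0 := by linarith [E]
    rcases mul_eq_zero.mp E' with h1 | h2
    · exact absurd h1 hx₁
    · rcases mul_eq_zero.mp h2 with h3 | h4
      · exact h3
      · exact absurd h4 (hne f a haf 0 t)
  refine ⟨A ∪ {f, h}, k, ?_, ?_, ?_⟩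
  · intro i hi
    rcases hi with hi | hi
    · exact Or.inl hi
    · exact Or.inr (Or.inl hi)
  · rintro (hk | hk | hk)
    · exact hx₁ (hconst k hk x₁)
    · exact hkf hk
    · exact hkh hk
  · rintro i (hi | hi | hi) x
    · exact hak0 i hi x
    · exact hi ▸ hfk0 x
    · exact hi ▸ hhk0 x
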